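/- Pointwise Lyapunov decrease under the saturated heading control law. In the setting of the saturated heading control law θ̇(t) = Sat_a^b(θ̇_d(t) − k_θ ĥ(t)ᵀEχ̂_p(t)) with k_θ > 0, a < 0 < b, define V(t) = ½‖ĥ(t) − χ̂_p(t)‖². Then: (i) V̇(t) = (θ̇(t) − θ̇_d(t)) · ĥ(t)ᵀEχ̂_p(t) for all t; (ii) at every time t at which no saturation occurs (i.e., a ≤ θ̇_d(t) − k_θĥ(t)ᵀEχ̂_p(t) ≤ b), one has V̇(t) = −k_θ (ĥ(t)ᵀEχ̂_p(t))² ≤ 0; (iii) at every upper-saturation time t with ĥ(t)ᵀEχ̂_p(t) ≥ 0 (i.e., σ(t) ∈ [0, π]), and at every lower-saturation time t with ĥ(t)ᵀEχ̂_p(t) ≤ 0 (i.e., σ(t) ∈ [−π, 0]), one has V̇(t) ≤ −k_θ (ĥ(t)ᵀEχ̂_p(t))² ≤ 0. -/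

import Mathlib

open Filter Topology Real

/-- saturation function `Sat_a^b(x) = min(max(x,a),b)` -/
noncomputable def sat (a b x : ℝ) : ℝ := min (max x a) b

/-- **Pointwise Lyapunov decrease under the saturated heading control law.**
With `V = ½‖ĥ - χ̂_p‖²` and `V̇` the expression `(Sat_a^b(θd - k_θ s) - θd)·s`
(where `s = ĥᵀEχ̂_p`):
(i) `V̇` is the derivative of `V`: `V̇(t) = (θ̇(t) - θ̇_d(t))·ĥᵀEχ̂_p`;
(ii) with no saturation, `V̇ = -k_θ s² ≤ 0`;
(iii) at upper-saturation times with `s ≥ 0` (i.e. `σ ∈ [0, π]`) and at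
lower-saturation times with `s ≤ 0` (i.e. `σ ∈ [-π, 0]`), `V̇ ≤ -k_θ s² ≤ 0`. -/
theorem pointwise_lyapunov_decrease_saturated
    (χ₁ χ₂ : ℝ → ℝ) (hχ₁ : ContDiff ℝ 1 χ₁) (hχ₂ : ContDiff ℝ 1 χ₂)
    (hnz : ∀ t : ℝ, 0 < χ₁ t ^ 2 + χ₂ t ^ 2)
    (θ : ℝ → ℝ)
    (kθ a b : ℝ) (hkθ : 0 < kθ) (ha : a < 0) (hb : 0 < b)
    (nrm s θd V Vd : ℝ → ℝ)
    (hnrm : ∀ t, nrm t = Real.sqrt (χ₁ t ^ 2 + χ₂ t ^ 2))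
    -- `s(t) = ĥ(t)ᵀ E χ̂_p(t)`
    (hs : ∀ t, s t = (Real.sin (θ t) * χ₁ t - Real.cos (θ t) * χ₂ t) / nrm t)
    -- `θd(t) = -χ̂_p(t)ᵀ E χ̇_p(t) / ‖χ_p(t)‖`
    (hθd : ∀ t, θd t =
      -((χ₁ t / nrm t) * (-(deriv χ₂ t)) + (χ₂ t / nrm t) * deriv χ₁ t) / nrm t)
    -- `V(t) = ½ ‖ĥ(t) - χ̂_p(t)‖²`
    (hV : ∀ t, V t = (1 / 2) *
      ((Real.cos (θ t) - χ₁ t / nrm t) ^ 2 + (Real.sin (θ t) - χ₂ t / nrm t) ^ 2))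
    -- `Vd(t) = (θ̇(t) - θ̇_d(t)) · ĥ(t)ᵀEχ̂_p(t)` with `θ̇` given by the control law
    (hVd : ∀ t, Vd t = (sat a b (θd t - kθ * s t) - θd t) * s t)
    -- saturated angular control law
    (hctrl : ∀ t : ℝ, 0 ≤ t → HasDerivAt θ (sat a b (θd t - kθ * s t)) t) :
    -- (i) `Vd` is the derivative of `V`
    (∀ t : ℝ, 0 ≤ t → HasDerivAt V (Vd t) t) ∧
    -- (ii) no saturation: `V̇ = -k_θ s² ≤ 0`
    (∀ t : ℝ, 0 ≤ t → a ≤ θd t - kθ * s t → θd t - kθ * s t ≤ b →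
      Vd t = -kθ * (s t) ^ 2 ∧ Vd t ≤ 0) ∧
    -- (iii) upper saturation with `σ(t) ∈ [0, π]` (i.e. `s t ≥ 0`)
    (∀ t : ℝ, 0 ≤ t → b < θd t - kθ * s t → 0 ≤ s t →
      Vd t ≤ -kθ * (s t) ^ 2 ∧ Vd t ≤ 0) ∧
    -- and lower saturation with `σ(t) ∈ [-π, 0]` (i.e. `s t ≤ 0`)
    (∀ t : ℝ, 0 ≤ t → θd t - kθ * s t < a → s t ≤ 0 →
      Vd t ≤ -kθ * (s t) ^ 2 ∧ Vd t ≤ 0) := by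
  obtain ⟨hd1, hd2⟩ : (∀ t : ℝ, HasDerivAt χ₁ (deriv χ₁ t) t) ∧
      (∀ t : ℝ, HasDerivAt χ₂ (deriv χ₂ t) t) :=
    ⟨fun t => (hχ₁.differentiable one_ne_zero t).hasDerivAt,
     fun t => (hχ₂.differentiable one_ne_zero t).hasDerivAt⟩
  refine ⟨?_, ?_, ?_, ?_⟩
  · intro t ht
    have hq : (0:ℝ) < χ₁ t ^ 2 + χ₂ t ^ 2 := hnz t
    have hn0 : nrm t ≠ 0 := by rw [hnrm t]; exact (Real.sqrt_pos.mpr hq).ne'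
    have hQ : HasDerivAt (fun u => χ₁ u ^ 2 + χ₂ u ^ 2)
        (2 * χ₁ t * deriv χ₁ t + 2 * χ₂ t * deriv χ₂ t) t := by
      have := ((hd1 t).fun_pow 2).fun_add ((hd2 t).fun_pow 2)
      simpa [mul_comm, mul_assoc, mul_left_comm] using this
    have hN : HasDerivAt nrm
        ((2 * χ₁ t * deriv χ₁ t + 2 * χ₂ t * deriv χ₂ t) / (2 * nrm t)) t := by
      have h := hQ.sqrt hq.ne'
      rw [show nrm = fun u => Real.sqrt (χ₁ u ^ 2 + χ₂ u ^ 2) from funext hnrm]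
      simpa [hnrm t] using h
    have hu := hctrl t ht
    have hA := (hu.cos).fun_sub ((hd1 t).fun_div hN hn0)
    have hB := (hu.sin).fun_sub ((hd2 t).fun_div hN hn0)
    have hD := ((hA.fun_pow 2).fun_add (hB.fun_pow 2)).const_mul (1/2 : ℝ)
    rw [show V = fun u => (1 / 2) *
      ((Real.cos (θ u) - χ₁ u / nrm u) ^ 2 + (Real.sin (θ u) - χ₂ u / nrm u) ^ 2)
      from funext hV]
    refine hD.congr_deriv ?_
    rw [hVd t, hs t, hθd t, hnrm t]
    set r := Real.sqrt (χ₁ t ^ 2 + χ₂ t ^ 2) with hr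
    have h2 : r ^ 2 = χ₁ t ^ 2 + χ₂ t ^ 2 := Real.sq_sqrt hq.le
    have hr0 : r ≠ 0 := by rw [hr]; exact (Real.sqrt_pos.mpr hq).ne'
    have h3 : r ^ 3 = (χ₁ t ^ 2 + χ₂ t ^ 2) * r := by rw [pow_succ, h2]
    have h4 : r ^ 4 = (χ₁ t ^ 2 + χ₂ t ^ 2) ^ 2 := by
      rw [show (4:ℕ) = 2*2 from rfl, pow_mul, h2]
    have h5 : r ^ 5 = (χ₁ t ^ 2 + χ₂ t ^ 2) ^ 2 * r := by rw [pow_succ, h4]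
    have h6 : r ^ 6 = (χ₁ t ^ 2 + χ₂ t ^ 2) ^ 3 := by
      rw [show (6:ℕ) = 2*3 from rfl, pow_mul, h2]
    have h7 : r ^ 7 = (χ₁ t ^ 2 + χ₂ t ^ 2) ^ 3 * r := by rw [pow_succ, h6]
    have h8 : r ^ 8 = (χ₁ t ^ 2 + χ₂ t ^ 2) ^ 4 := by
      rw [show (8:ℕ) = 2*4 from rfl, pow_mul, h2]
    push_cast
    field_simp
    ring_nf
    simp only [h8, h7, h6, h5, h4, h3, h2]
    ring
  · intro t ht hla hlb
    have hsat : sat a b (θd t - kθ * s t) = θd t - kθ * s t := by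
      unfold sat; rw [max_eq_left hla, min_eq_left hlb]
    constructor
    · rw [hVd t, hsat]; ring
    · rw [hVd t, hsat]; nlinarith [sq_nonneg (s t)]
  · intro t ht hub hs0
    have hsat : sat a b (θd t - kθ * s t) = b := by
      unfold sat
      rw [max_eq_left (le_trans ha.le (le_trans hb.le hub.le)), min_eq_right hub.le]
    have key : Vd t ≤ -kθ * s t ^ 2 := by
      rw [hVd t, hsat]
      have : (b - θd t) * s t ≤ (-kθ * s t) * s t := by
        apply mul_le_mul_of_nonneg_right _ hs0
        linarith
      nlinarith
    exact ⟨key, le_trans key (by nlinarith [sq_nonneg (s t)])⟩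
  · intro t ht hlo hs0
    have hsat : sat a b (θd t - kθ * s t) = a := by
      unfold sat
      rw [max_eq_right hlo.le, min_eq_left (le_trans ha.le hb.le)]
    have key : Vd t ≤ -kθ * s t ^ 2 := by
      rw [hVd t, hsat]
      have : (a - θd t) * (-s t) ≥ (-kθ * s t) * (-s t) := by
        apply mul_le_mul_of_nonneg_right _ (neg_nonneg.mpr hs0)
        linarith
      nlinarith
    exact ⟨key, le_trans key (by nlinarith [sq_nonneg (s t)])⟩
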